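/- Let s > 2 and let i be an integer with 1 ≤ i ≤ s−2. Let C ⊆ Z_{2^s}^{2^{s+1−i}} be the subgroup generated by the all-ones vector and the vector 2^{i−1}·(0, 1, 2, …, 2^{s+1−i}−1). Then the binary code Φ(C) is not linear. -/

import Mathlib

/-- The `i`-th digit of the binary expansion of `u : ZMod (2^s)`. -/
def gdigit (s : ℕ) (u : ZMod (2^s)) (i : ℕ) : ZMod 2 :=
  if (ZMod.val u).testBit i then 1 else 0

/-- Carlet's generalized Gray map `φ : ZMod (2^s) → (Z_2^{s-1} → Z_2)`:
the coordinate indexed by `y ∈ Z_2^{s-1}` is `u_{s-1} + ∑ u_i y_i`. -/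
def gray (s : ℕ) (u : ZMod (2^s)) : (Fin (s - 1) → ZMod 2) → ZMod 2 :=
  fun y => gdigit s u (s - 1) + ∑ i : Fin (s - 1), gdigit s u (i : ℕ) * y i

/-- The coordinatewise extension `Φ` of the Gray map, on vectors indexed by `ι`. -/
def PhiMap {ι : Type} (s : ℕ) (u : ι → ZMod (2^s)) :
    ι × (Fin (s - 1) → ZMod 2) → ZMod 2 :=
  fun p => gray s (u p.1) p.2

/-- A binary code is linear if it is closed under addition. -/
def IsLinearCode {V : Type} [Add V] (C : Set V) : Prop :=
  ∀ x ∈ C, ∀ y ∈ C, x + y ∈ C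

theorem xor_two_pow {a b : ℕ} (h : a < b) : 2^a ^^^ 2^b = 2^a + 2^b := by
  apply Nat.eq_of_testBit_eq
  intro j
  have hb : 2^a + 2^b = 2^(a+1) * 2^(b-a-1) + 2^a := by
    rw [← pow_add]
    have : a + 1 + (b - a - 1) = b := by omega
    rw [this]; omega
  rw [Nat.testBit_xor, hb,
    Nat.testBit_two_pow_mul_add _ (Nat.pow_lt_pow_right one_lt_two (Nat.lt_succ_self a)),
    Nat.testBit_two_pow, Nat.testBit_two_pow]
  split
  · next hj =>
    have : b ≠ j := by omega
    simp [this, Nat.testBit_two_pow]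
  · next hj =>
    have ha : a ≠ j := by omega
    have hiff : (b - a - 1 = j - (a+1)) ↔ (b = j) := by omega
    simp [ha, Nat.testBit_two_pow, hiff]

instance instNeZeroPow (s : ℕ) : NeZero (2^s) := ⟨(Nat.two_pow_pos s).ne'⟩

def zxor (s : ℕ) (u w : ZMod (2^s)) : ZMod (2^s) := ((ZMod.val u ^^^ ZMod.val w : ℕ) : ZMod (2^s))

lemma val_zxor (s : ℕ) (u w : ZMod (2^s)) : ZMod.val (zxor s u w) = ZMod.val u ^^^ ZMod.val w := by
  have h : ZMod.val u ^^^ ZMod.val w < 2^s := Nat.xor_lt_two_pow (ZMod.val_lt u) (ZMod.val_lt w)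
  rw [zxor, ZMod.val_natCast_of_lt h]

lemma gdigit_zxor (s : ℕ) (u w : ZMod (2^s)) (j : ℕ) :
    gdigit s (zxor s u w) j = gdigit s u j + gdigit s w j := by
  unfold gdigit
  rw [val_zxor, Nat.testBit_xor]
  cases hu : (ZMod.val u).testBit j <;> cases hw : (ZMod.val w).testBit j <;> simp <;> decide

lemma gray_add (s : ℕ) (u w : ZMod (2^s)) (y : Fin (s-1) → ZMod 2) :
    gray s u y + gray s w y = gray s (zxor s u w) y := by
  unfold gray
  simp only [gdigit_zxor, add_mul, Finset.sum_add_distrib]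
  ring

lemma gray_inj (s : ℕ) (hs : 0 < s) (u w : ZMod (2^s)) (h : gray s u = gray s w) : u = w := by
  have h0 : gdigit s u (s-1) = gdigit s w (s-1) := by
    have := congrFun h 0
    unfold gray at this
    simpa using this
  have hd : ∀ j, gdigit s u j = gdigit s w j := by
    intro j
    by_cases hj : j < s - 1
    · have h1 := congrFun h (Pi.single ⟨j, hj⟩ 1)
      unfold gray at h1
      simp only [Pi.single_apply, mul_ite, mul_one, mul_zero, Finset.sum_ite_eq',
        Finset.mem_univ, if_true] at h1
      rw [h0] at h1
      exact add_left_cancel h1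
    · by_cases hj2 : j = s - 1
      · rw [hj2]; exact h0
      · have hjs : s ≤ j := by omega
        have hu : (ZMod.val u).testBit j = false :=
          Nat.testBit_lt_two_pow (lt_of_lt_of_le (ZMod.val_lt u) (Nat.pow_le_pow_right (by norm_num) hjs))
        have hw : (ZMod.val w).testBit j = false :=
          Nat.testBit_lt_two_pow (lt_of_lt_of_le (ZMod.val_lt w) (Nat.pow_le_pow_right (by norm_num) hjs))
        simp [gdigit, hu, hw]
  have hval : ZMod.val u = ZMod.val w := by
    apply Nat.eq_of_testBit_eq
    intro j
    have := hd j
    unfold gdigit at this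
    cases hu : (ZMod.val u).testBit j <;> cases hw : (ZMod.val w).testBit j <;>
      simp [hu, hw] at this ⊢
  exact ZMod.val_injective _ hval

theorem gray_image_not_linear (s : ℕ) (hs : 2 < s) (i : ℕ) (hi1 : 1 ≤ i) (hi2 : i ≤ s - 2) :
    ¬ IsLinearCode (PhiMap s ''
      ((AddSubgroup.closure
          ({(fun _ => 1 : Fin (2 ^ (s + 1 - i)) → ZMod (2^s)),
            fun k : Fin (2 ^ (s + 1 - i)) => (2 ^ (i - 1) : ZMod (2^s)) * ((k : ℕ) : ZMod (2^s))} :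
            Set (Fin (2 ^ (s + 1 - i)) → ZMod (2^s)))) :
        Set (Fin (2 ^ (s + 1 - i)) → ZMod (2^s)))) := by
  intro hlin
  set v : Fin (2 ^ (s + 1 - i)) → ZMod (2^s) :=
    fun k : Fin (2 ^ (s + 1 - i)) => (2 ^ (i - 1) : ZMod (2^s)) * ((k : ℕ) : ZMod (2^s)) with hvdef
  set one : Fin (2 ^ (s + 1 - i)) → ZMod (2^s) := (fun _ => 1) with honedef
  have hN8 : 8 ≤ 2 ^ (s + 1 - i) := by
    calc (8:ℕ) = 2^3 := rfl
    _ ≤ 2 ^ (s + 1 - i) := Nat.pow_le_pow_right (by norm_num) (by omega)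
  have hv : v ∈ AddSubgroup.closure {one, v} :=
    AddSubgroup.subset_closure (Set.mem_insert_of_mem _ rfl)
  have hvv : v + v ∈ AddSubgroup.closure {one, v} := add_mem hv hv
  obtain ⟨c, hc, hceq⟩ :=
    hlin _ ⟨v, SetLike.mem_coe.mpr hv, rfl⟩ _ ⟨v + v, SetLike.mem_coe.mpr hvv, rfl⟩
  set z : Fin (2 ^ (s + 1 - i)) → ZMod (2^s) := fun k => zxor s (v k) (v k + v k) with hzdef
  have hPhi : PhiMap s v + PhiMap s (v + v) = PhiMap s z := by
    funext p
    simp only [PhiMap, Pi.add_apply]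
    exact gray_add s (v p.1) (v p.1 + v p.1) p.2
  rw [hPhi] at hceq
  have hcz : c = z := by
    funext k
    refine gray_inj s (by omega) _ _ (funext fun y => ?_)
    exact congrFun hceq (k, y)
  obtain ⟨m, n, hmn⟩ := (AddSubgroup.mem_closure_pair).mp hc
  rw [hcz] at hmn
  -- numeric facts
  have hp1 : (2:ℕ)^i = 2^(i-1) * 2 := by
    rw [← pow_succ]; congr 1; omega
  have hp2 : (2:ℕ)^(i+1) = 2^i * 2 := by rw [← pow_succ]
  have hps : (2:ℕ)^(i+2) ≤ 2^s := Nat.pow_le_pow_right (by norm_num) (by omega)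
  have hq : (2:ℕ)^(i+2) = 2^(i+1) * 2 := by rw [← pow_succ]
  have hpos : 0 < (2:ℕ)^(i-1) := Nat.two_pow_pos _
  have b0 : (2:ℕ)^(i-1) < 2^s := by omega
  have b1 : (2:ℕ)^i < 2^s := by omega
  have bA : (2:ℕ)^(i-1) + 2^i < 2^s := by omega
  have bB : (2:ℕ)^i + 2^(i+1) < 2^s := by omega
  -- coordinates
  set k0 : Fin (2 ^ (s + 1 - i)) := ⟨0, by omega⟩ with hk0
  set k1 : Fin (2 ^ (s + 1 - i)) := ⟨1, by omega⟩ with hk1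
  set k3 : Fin (2 ^ (s + 1 - i)) := ⟨3, by omega⟩ with hk3
  have hv0 : v k0 = 0 := by
    simp [hvdef, hk0]
  have hv1 : v k1 = ((2^(i-1) : ℕ) : ZMod (2^s)) := by
    simp only [hvdef, hk1]
    push_cast
    ring
  have hv1s : v k1 + v k1 = ((2^i : ℕ) : ZMod (2^s)) := by
    rw [hv1, ← Nat.cast_add]
    congr 1
    omega
  have hzp : (2:ZMod (2^s))^i = 2^(i-1) * 2 := by
    have h := congrArg (fun t : ℕ => (t : ZMod (2^s))) hp1
    push_cast at h
    exact h
  have hv3 : v k3 = ((2^(i-1) + 2^i : ℕ) : ZMod (2^s)) := by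
    simp only [hvdef, hk3]
    push_cast
    rw [hzp]
    ring
  have hv3s : v k3 + v k3 = ((2^i + 2^(i+1) : ℕ) : ZMod (2^s)) := by
    rw [hv3, ← Nat.cast_add]
    congr 1
    omega
  have hz0 : z k0 = 0 := by
    show zxor s (v k0) (v k0 + v k0) = _
    rw [hv0]
    simp [zxor]
  have hz1 : z k1 = ((2^(i-1) + 2^i : ℕ) : ZMod (2^s)) := by
    show zxor s (v k1) (v k1 + v k1) = _
    rw [zxor, hv1s, hv1, ZMod.val_natCast_of_lt b0, ZMod.val_natCast_of_lt b1,
      xor_two_pow (show i-1 < i by omega)]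
  have hz3 : z k3 = ((2^(i-1) + 2^(i+1) : ℕ) : ZMod (2^s)) := by
    show zxor s (v k3) (v k3 + v k3) = _
    rw [zxor, hv3s, hv3, ZMod.val_natCast_of_lt bA, ZMod.val_natCast_of_lt bB]
    congr 1
    rw [← xor_two_pow (show i-1 < i by omega), ← xor_two_pow (Nat.lt_succ_self i),
      ← xor_two_pow (show i-1 < i+1 by omega),
      Nat.xor_assoc, ← Nat.xor_assoc (2^i) (2^i), Nat.xor_self, Nat.zero_xor]
  have hone : ∀ k, one k = 1 := fun k => rfl
  have hm : (m : ZMod (2^s)) = 0 := by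
    have E0 := congrFun hmn k0
    simp only [zsmul_eq_mul, Pi.add_apply, Pi.mul_apply, Pi.intCast_apply, honedef, hv0, hz0,
      mul_zero, add_zero, mul_one] at E0
    exact E0
  have hE1 : (n : ZMod (2^s)) * ((2^(i-1) : ℕ) : ZMod (2^s)) = ((2^(i-1) + 2^i : ℕ) : ZMod (2^s)) := by
    have E1 := congrFun hmn k1
    simp only [zsmul_eq_mul, Pi.add_apply, Pi.mul_apply, Pi.intCast_apply, honedef, hv1, hz1,
      mul_one, hm, zero_mul, zero_add] at E1
    exact E1
  have hE3 : (n : ZMod (2^s)) * ((2^(i-1) + 2^i : ℕ) : ZMod (2^s))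
      = ((2^(i-1) + 2^(i+1) : ℕ) : ZMod (2^s)) := by
    have E3 := congrFun hmn k3
    simp only [zsmul_eq_mul, Pi.add_apply, Pi.mul_apply, Pi.intCast_apply, honedef, hv3, hz3,
      mul_one, hm, zero_mul, zero_add] at E3
    exact E3
  have key : (((2^(i-1) + 2^i) * 3 : ℕ) : ZMod (2^s)) = ((2^(i-1) + 2^(i+1) : ℕ) : ZMod (2^s)) := by
    have h := hE3
    rw [show ((2^(i-1) + 2^i : ℕ) : ZMod (2^s)) = ((2^(i-1) : ℕ) : ZMod (2^s)) * 3 from by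
      rw [show (2:ℕ)^(i-1) + 2^i = 2^(i-1) * 3 by omega]; push_cast; ring] at h
    rw [← mul_assoc, hE1] at h
    calc (((2^(i-1) + 2^i) * 3 : ℕ) : ZMod (2^s))
        = ((2^(i-1) + 2^i : ℕ) : ZMod (2^s)) * 3 := by push_cast; ring
      _ = _ := h
  have hmod : ((2^(i-1) + 2^(i+1)) : ℕ) ≡ ((2^(i-1) + 2^i) * 3 : ℕ) [MOD 2^s] :=
    ((ZMod.natCast_eq_natCast_iff _ _ _).mp key).symm
  have hle : (2:ℕ)^(i-1) + 2^(i+1) ≤ (2^(i-1) + 2^i) * 3 := by omega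
  have hdvd : 2^s ∣ (2^(i-1) + 2^i) * 3 - (2^(i-1) + 2^(i+1)) :=
    (Nat.modEq_iff_dvd' hle).mp hmod
  have hsub : (2^(i-1) + 2^i) * 3 - (2^(i-1) + 2^(i+1)) = 2^(i+1) := by omega
  rw [hsub] at hdvd
  have hposi : 0 < (2:ℕ)^(i+1) := Nat.two_pow_pos _
  have := Nat.le_of_dvd hposi hdvd
  omega
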